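/- arXiv:1810.06087 — 2 statements merged into one kernel-verified Lean document; each statement's English description precedes it below -/
import Mathlib

section
/- Let g be a discrete-time Markov transition kernel on a σ-compact metric state space X with stationary distribution π, and for every Borel set S with π(S) > 0 let t̄_m^{(S)} denote the standardized mixing time of the trace kernel g^{(S)}. Then t̄_m ≤ sup{t̄_m^{(S)} : S compact Borel subset of X with π(S) > 0}. -/
open MeasureTheory ENNReal

noncomputable section

namespace MixHit

variable {X : Type*} [MeasurableSpace X]

/-- Total variation distance between two Borel measures. -/
def tv (μ ν : Measure X) : ℝ≥0∞ :=
  ⨆ (A : Set X) (_ : MeasurableSet A), (μ A - ν A) ⊔ (ν A - μ A)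

/-- `g` is a Markov transition kernel: each `g x` is a (Borel) probability measure,
measurably in `x`. -/
def IsMarkov (g : X → Measure X) : Prop :=
  (∀ x, IsProbabilityMeasure (g x)) ∧
    ∀ A : Set X, MeasurableSet A → Measurable fun x => g x A

/-- `t`-step transition probabilities (`iterK g 0 x = δ_x`). -/
def iterK (g : X → Measure X) : ℕ → X → Measure X
  | 0 => fun x => Measure.dirac x
  | n + 1 => fun x => (g x).bind (iterK g n)

/-- `π` is a stationary distribution for `g`. -/
def Stationary (g : X → Measure X) (π : Measure X) : Prop :=
  ∀ A : Set X, MeasurableSet A → ∫⁻ x, g x A ∂π = π A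

/-- `g` is reversible with respect to `π`. -/
def Reversible (g : X → Measure X) (π : Measure X) : Prop :=
  ∀ A B : Set X, MeasurableSet A → MeasurableSet B →
    ∫⁻ x in A, g x B ∂π = ∫⁻ x in B, g x A ∂π

/-- The lazy kernel `g_L(x,·) = (1/2) g(x,·) + (1/2) δ_x`. -/
def lazy (g : X → Measure X) : X → Measure X := fun x =>
  (2 : ℝ≥0∞)⁻¹ • g x + (2 : ℝ≥0∞)⁻¹ • Measure.dirac x

/-- Mixing time `min {t : sup_x ‖g^t(x,·) − π‖ ≤ ε}`, as an element of `ℝ≥0∞`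
(`⊤` if there is no such `t`). -/
def mixTime (g : X → Measure X) (π : Measure X) (ε : ℝ≥0∞) : ℝ≥0∞ :=
  ⨅ (t : ℕ) (_ : ∀ x, tv (iterK g t x) π ≤ ε), (t : ℝ≥0∞)

/-- `d̄(t) = sup_{x,y} ‖g^t(x,·) − g^t(y,·)‖`. -/
def dbar (g : X → Measure X) (t : ℕ) : ℝ≥0∞ :=
  ⨆ (x : X) (y : X), tv (iterK g t x) (iterK g t y)

/-- Standardized mixing time `min {t : d̄(t) ≤ ε}` (`⊤` if there is no such `t`). -/
def stdMix (g : X → Measure X) (ε : ℝ≥0∞) : ℝ≥0∞ :=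
  ⨅ (t : ℕ) (_ : dbar g t ≤ ε), (t : ℝ≥0∞)

/-- `P_x(τ_A = t)` for the chain with kernel `g` started at `x`, where
`τ_A = min {t : X_t ∈ A}` (first-step recursion). -/
def hitEq (g : X → Measure X) (A : Set X) : ℕ → X → ℝ≥0∞
  | 0 => fun x => A.indicator (fun _ => 1) x
  | n + 1 => fun x => Aᶜ.indicator (fun x' => ∫⁻ y, hitEq g A n y ∂(g x')) x

/-- `P_x(τ_A ≤ t)`. -/
def hitLE (g : X → Measure X) (A : Set X) (t : ℕ) (x : X) : ℝ≥0∞ :=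
  ∑ s ∈ Finset.range (t + 1), hitEq g A s x

/-- `E_x[τ_A] = ∑_{t ≥ 0} P_x(τ_A > t)`. -/
def expHit (g : X → Measure X) (A : Set X) (x : X) : ℝ≥0∞ :=
  ∑' t : ℕ, (1 - hitLE g A t x)

/-- Maximum hitting time `t_H(α) = sup {E_x[τ_A] : x ∈ X, A Borel, π(A) ≥ α}`. -/
def maxHit (g : X → Measure X) (π : Measure X) (α : ℝ) : ℝ≥0∞ :=
  ⨆ (x : X) (A : Set X) (_ : MeasurableSet A) (_ : ENNReal.ofReal α ≤ π A),
    expHit g A x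

/-- Large hitting time
`τ_g(α) = min {t : inf {P_x(τ_A ≤ t) : x ∈ X, A Borel, π(A) ≥ α} > 0.9}`. -/
def largeHit (g : X → Measure X) (π : Measure X) (α : ℝ) : ℝ≥0∞ :=
  ⨅ (t : ℕ) (_ : (9 / 10 : ℝ≥0∞) <
      ⨅ (x : X) (A : Set X) (_ : MeasurableSet A) (_ : ENNReal.ofReal α ≤ π A),
        hitLE g A t x),
    (t : ℝ≥0∞)

/-- The strong Feller property: continuity of `x ↦ g(x,·)` in total variation. -/
def StrongFeller [PseudoMetricSpace X] (g : X → Measure X) : Prop :=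
  ∀ x : X, ∀ ε : ℝ, 0 < ε → ∃ δ : ℝ, 0 < δ ∧
    ∀ y : X, dist y x < δ → tv (g x) (g y) < ENNReal.ofReal ε

/-- Law of `X_t` on the event that `t` is the first time the chain lies in `S`. -/
def enterDist (g : X → Measure X) (S : Set X) : ℕ → X → Measure X
  | 0 => fun x => (Measure.dirac x).restrict S
  | n + 1 => fun x => Sᶜ.indicator (fun x' => (g x').bind (enterDist g S n)) x

/-- Law of the chain's position at its first entrance (at a time `≥ 0`) into `S`. -/
def hitMeasure (g : X → Measure X) (S : Set X) (x : X) : Measure X :=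
  Measure.sum fun t => enterDist g S t x

/-- One step of the trace of `g` on `S`: take one `g`-step, then run until the
first entrance into `S`. -/
def traceK (g : X → Measure X) (S : Set X) : X → Measure X :=
  fun x => (g x).bind (hitMeasure g S)

/-- The trace of `g` on `S`, viewed as a kernel on the subtype `S`. -/
def traceSub (g : X → Measure X) (S : Set X) : S → Measure S :=
  fun x => (traceK g S (x : X)).comap (Subtype.val)

/-- Normalization of `π` to `S`, as a measure on the subtype `S`. -/
def normSub (π : Measure X) (S : Set X) : Measure S :=
  (π S)⁻¹ • π.comap (Subtype.val : S → X)

/-- Ergodicity: from every starting point, the chain converges to `π`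
in total variation. -/
def ErgodicK (g : X → Measure X) (π : Measure X) : Prop :=
  Stationary g π ∧
    ∀ x : X, Filter.Tendsto (fun t => tv (iterK g t x) π) Filter.atTop (nhds 0)



section Aux

open Measure Set Filter

variable {X : Type*} [MeasurableSpace X]

lemma IsMarkov.measurable {g : X → Measure X} (hg : IsMarkov g) : Measurable g :=
  Measure.measurable_of_measurable_coe _ hg.2

lemma measurable_iterK {g : X → Measure X} (hg : Measurable g) (t : ℕ) :
    Measurable (iterK g t) := by
  induction t with
  | zero => exact Measure.measurable_dirac
  | succ n ih => exact (Measure.measurable_bind' ih).comp hg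

lemma iterK_succ_right {g : X → Measure X} (hg : Measurable g) (t : ℕ) (x : X) :
    iterK g (t + 1) x = (iterK g t x).bind g := by
  induction t generalizing x with
  | zero =>
      show (g x).bind (iterK g 0) = (Measure.dirac x).bind g
      have h1 : (g x).bind (iterK g 0) = (g x).bind Measure.dirac := rfl
      rw [h1, Measure.bind_dirac, Measure.dirac_bind hg]
  | succ n ih =>
      show (g x).bind (iterK g (n + 1)) = ((g x).bind (iterK g n)).bind g
      have h1 : iterK g (n + 1) = fun y => (iterK g n y).bind g := funext fun y => ih y
      rw [h1, ← Measure.bind_bind (measurable_iterK hg n).aemeasurable hg.aemeasurable]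

lemma iterK_univ {g : X → Measure X} (hg : IsMarkov g) (t : ℕ) (x : X) :
    iterK g t x univ = 1 := by
  induction t generalizing x with
  | zero => simp [iterK]
  | succ n ih =>
      show (g x).bind (iterK g n) univ = 1
      rw [Measure.bind_apply MeasurableSet.univ (measurable_iterK hg.measurable n).aemeasurable]
      calc ∫⁻ z, iterK g n z univ ∂(g x) = ∫⁻ _, 1 ∂(g x) := lintegral_congr fun z => ih z
        _ = g x univ := lintegral_one
        _ = 1 := (hg.1 x).measure_univ

lemma iterK_apply_le_one {g : X → Measure X} (hg : IsMarkov g) (t : ℕ) (x : X) (A : Set X) :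
    iterK g t x A ≤ 1 :=
  (measure_mono (subset_univ A)).trans (iterK_univ hg t x).le

lemma iterK_univ_le_one {Y : Type*} [MeasurableSpace Y] {k : Y → Measure Y}
    (hk : Measurable k) (hm : ∀ y, k y univ ≤ 1) (t : ℕ) (y : Y) :
    iterK k t y univ ≤ 1 := by
  induction t generalizing y with
  | zero => simp [iterK]
  | succ n ih =>
      show (k y).bind (iterK k n) univ ≤ 1
      rw [Measure.bind_apply MeasurableSet.univ (measurable_iterK hk n).aemeasurable]
      calc ∫⁻ z, iterK k n z univ ∂(k y) ≤ ∫⁻ _, 1 ∂(k y) := lintegral_mono fun z => ih z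
        _ = k y univ := lintegral_one
        _ ≤ 1 := hm y

lemma iterK_mono {Y : Type*} [MeasurableSpace Y] {k k' : Y → Measure Y} (hk : Measurable k)
    (hk' : Measurable k') (hle : ∀ y, k y ≤ k' y) (t : ℕ) (y : Y) :
    iterK k t y ≤ iterK k' t y := by
  induction t generalizing y with
  | zero => exact le_rfl
  | succ n ih =>
      refine Measure.le_iff.2 fun A hA => ?_
      show (k y).bind (iterK k n) A ≤ (k' y).bind (iterK k' n) A
      rw [Measure.bind_apply hA (measurable_iterK hk n).aemeasurable,
        Measure.bind_apply hA (measurable_iterK hk' n).aemeasurable]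
      calc ∫⁻ z, iterK k n z A ∂(k y) ≤ ∫⁻ z, iterK k' n z A ∂(k y) :=
            lintegral_mono fun z => Measure.le_iff'.1 (ih z) A
        _ ≤ ∫⁻ z, iterK k' n z A ∂(k' y) := lintegral_mono' (hle y) le_rfl

lemma indicator_measure_apply {f : X → Measure X} {s : Set X} (x : X) (A : Set X) :
    s.indicator f x A = s.indicator (fun y => f y A) x := by
  by_cases h : x ∈ s <;> simp [h]

lemma measurable_enterDist {g : X → Measure X} (hg : Measurable g) {S : Set X}
    (hS : MeasurableSet S) (t : ℕ) : Measurable (enterDist g S t) := by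
  induction t with
  | zero =>
      apply Measure.measurable_of_measurable_coe
      intro A hA
      have h1 : (fun x => enterDist g S 0 x A) = fun x => (A ∩ S).indicator 1 x := by
        funext x
        show (Measure.dirac x).restrict S A = _
        rw [Measure.restrict_apply hA, Measure.dirac_apply' x (hA.inter hS)]
      rw [h1]
      exact measurable_const.indicator (hA.inter hS)
  | succ n ih =>
      apply Measure.measurable_of_measurable_coe
      intro A hA
      have h1 : (fun x => enterDist g S (n + 1) x A)
          = Sᶜ.indicator (fun y => (g y).bind (enterDist g S n) A) := by
        funext x; exact indicator_measure_apply x A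
      rw [h1]
      exact ((Measure.measurable_coe hA).comp
        ((Measure.measurable_bind' ih).comp hg)).indicator hS.compl

lemma measurable_hitMeasure {g : X → Measure X} (hg : Measurable g) {S : Set X}
    (hS : MeasurableSet S) : Measurable (hitMeasure g S) := by
  apply Measure.measurable_of_measurable_coe
  intro A hA
  have h1 : (fun x => hitMeasure g S x A) = fun x => ∑' t, enterDist g S t x A := by
    funext x; exact Measure.sum_apply _ hA
  rw [h1]
  exact Measurable.ennreal_tsum fun t =>
    (Measure.measurable_coe hA).comp (measurable_enterDist hg hS t)

lemma sum_enterDist_univ_le {g : X → Measure X} (hg : IsMarkov g) {S : Set X}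
    (hS : MeasurableSet S) (N : ℕ) :
    ∀ x, ∑ t ∈ Finset.range N, enterDist g S t x univ ≤ 1 := by
  induction N with
  | zero => intro x; simp
  | succ n ih =>
      intro x
      rw [Finset.sum_range_succ']
      by_cases hx : x ∈ S
      · have h0 : enterDist g S 0 x univ = 1 := by
          show (Measure.dirac x).restrict S univ = 1
          rw [Measure.restrict_apply MeasurableSet.univ, univ_inter,
            Measure.dirac_apply' x hS]
          simp [hx]
        have hsucc : ∀ i, enterDist g S (i + 1) x univ = 0 := by
          intro i
          show (Sᶜ.indicator (fun x' => (g x').bind (enterDist g S i)) x) univ = 0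
          rw [indicator_measure_apply, Set.indicator_of_notMem (by simp [hx])]
        simp [hsucc, h0]
      · have hsucc : ∀ i, enterDist g S (i + 1) x univ
            = (g x).bind (enterDist g S i) univ := by
          intro i
          show (Sᶜ.indicator (fun x' => (g x').bind (enterDist g S i)) x) univ
            = (g x).bind (enterDist g S i) univ
          rw [indicator_measure_apply, Set.indicator_of_mem (by simp [hx])]
        have h0 : enterDist g S 0 x univ = 0 := by
          show (Measure.dirac x).restrict S univ = 0
          rw [Measure.restrict_apply MeasurableSet.univ, univ_inter,
            Measure.dirac_apply' x hS]
          simp [hx]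
        rw [h0, add_zero]
        calc ∑ i ∈ Finset.range n, enterDist g S (i + 1) x univ
            = ∑ i ∈ Finset.range n, ∫⁻ y, enterDist g S i y univ ∂(g x) := by
              refine Finset.sum_congr rfl fun i _ => ?_
              rw [hsucc i, Measure.bind_apply MeasurableSet.univ
                (measurable_enterDist hg.measurable hS i).aemeasurable]
          _ = ∫⁻ y, ∑ i ∈ Finset.range n, enterDist g S i y univ ∂(g x) :=
              (lintegral_finset_sum _ fun i _ =>
                (Measure.measurable_coe MeasurableSet.univ).comp
                  (measurable_enterDist hg.measurable hS i)).symm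
          _ ≤ ∫⁻ _, 1 ∂(g x) := lintegral_mono fun y => ih y
          _ = g x univ := lintegral_one
          _ = 1 := (hg.1 x).measure_univ

lemma hitMeasure_univ_le_one {g : X → Measure X} (hg : IsMarkov g) {S : Set X}
    (hS : MeasurableSet S) (x : X) : hitMeasure g S x univ ≤ 1 := by
  rw [hitMeasure, Measure.sum_apply _ MeasurableSet.univ, ENNReal.tsum_eq_iSup_sum]
  refine iSup_le fun s => ?_
  obtain ⟨n, hn⟩ := Finset.exists_nat_subset_range s
  calc ∑ t ∈ s, enterDist g S t x univ
      ≤ ∑ t ∈ Finset.range n, enterDist g S t x univ := Finset.sum_le_sum_of_subset hn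
    _ ≤ 1 := sum_enterDist_univ_le hg hS n x

lemma measurable_traceK {g : X → Measure X} (hg : Measurable g) {S : Set X}
    (hS : MeasurableSet S) : Measurable (traceK g S) :=
  (Measure.measurable_bind' (measurable_hitMeasure hg hS)).comp hg

lemma traceK_univ_le_one {g : X → Measure X} (hg : IsMarkov g) {S : Set X}
    (hS : MeasurableSet S) (x : X) : traceK g S x univ ≤ 1 := by
  rw [traceK, Measure.bind_apply MeasurableSet.univ (measurable_hitMeasure hg.measurable hS).aemeasurable]
  calc ∫⁻ z, hitMeasure g S z univ ∂(g x) ≤ ∫⁻ _, 1 ∂(g x) :=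
        lintegral_mono fun z => hitMeasure_univ_le_one hg hS z
    _ = g x univ := lintegral_one
    _ = 1 := (hg.1 x).measure_univ

lemma indicator_le_hitMeasure {g : X → Measure X} {S : Set X} (hS : MeasurableSet S)
    {B : Set X} (hB : MeasurableSet B) (hBS : B ⊆ S) (z : X) :
    B.indicator (fun _ => (1 : ℝ≥0∞)) z ≤ hitMeasure g S z B := by
  by_cases hz : z ∈ B
  · rw [Set.indicator_of_mem hz]
    have h0 : enterDist g S 0 z B = 1 := by
      show (Measure.dirac z).restrict S B = 1
      rw [Measure.restrict_apply hB, Measure.dirac_apply' z (hB.inter hS)]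
      simp [hz, hBS hz]
    rw [hitMeasure, Measure.sum_apply _ hB]
    calc (1 : ℝ≥0∞) = enterDist g S 0 z B := h0.symm
      _ ≤ ∑' t, enterDist g S t z B := ENNReal.le_tsum 0
  · simp [Set.indicator_of_notMem hz]

lemma restrict_le_traceK {g : X → Measure X} (hg : IsMarkov g) {S : Set X}
    (hS : MeasurableSet S) (x : X) :
    (g x).restrict S ≤ (traceK g S x).restrict S := by
  refine Measure.le_iff.2 fun A hA => ?_
  rw [Measure.restrict_apply hA, Measure.restrict_apply hA, traceK,
    Measure.bind_apply (hA.inter hS) (measurable_hitMeasure hg.measurable hS).aemeasurable]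
  calc g x (A ∩ S) = ∫⁻ z, (A ∩ S).indicator (fun _ => (1 : ℝ≥0∞)) z ∂(g x) :=
        (lintegral_indicator_one (hA.inter hS)).symm
    _ ≤ ∫⁻ z, hitMeasure g S z (A ∩ S) ∂(g x) :=
        lintegral_mono fun z =>
          indicator_le_hitMeasure hS (hA.inter hS) inter_subset_right z

lemma measurable_traceSub {g : X → Measure X} (hg : Measurable g) {S : Set X}
    (hS : MeasurableSet S) : Measurable (traceSub g S) := by
  apply Measure.measurable_of_measurable_coe
  intro B hB
  have h1 : (fun w : S => traceSub g S w B)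
      = fun w : S => traceK g S (w : X) (Subtype.val '' B) := by
    funext w
    exact (MeasurableEmbedding.subtype_coe hS).comap_apply _ _
  rw [h1]
  exact (Measure.measurable_coe
      ((MeasurableEmbedding.subtype_coe hS).measurableSet_image' hB)).comp
    ((measurable_traceK hg hS).comp measurable_subtype_coe)

lemma traceSub_univ_le_one {g : X → Measure X} (hg : IsMarkov g) {S : Set X}
    (hS : MeasurableSet S) (w : S) : traceSub g S w univ ≤ 1 := by
  rw [traceSub, (MeasurableEmbedding.subtype_coe hS).comap_apply]
  exact (measure_mono (subset_univ _)).trans (traceK_univ_le_one hg hS _)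

lemma measurable_restK {g : X → Measure X} (hg : Measurable g) {S : Set X}
    (hS : MeasurableSet S) : Measurable (fun z => (g z).restrict S) := by
  apply Measure.measurable_of_measurable_coe
  intro A hA
  have h1 : (fun z => (g z).restrict S A) = fun z => g z (A ∩ S) := by
    funext z; exact Measure.restrict_apply hA
  rw [h1]
  exact (Measure.measurable_coe (hA.inter hS)).comp hg

lemma iterK_restrict_le_trace {g : X → Measure X} (hg : IsMarkov g) {S : Set X}
    (hS : MeasurableSet S) :
    ∀ (t : ℕ) (w : S) (A : Set X), MeasurableSet A →
      iterK (fun z => (g z).restrict S) t (w : X) A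
        ≤ iterK (traceSub g S) t w (Subtype.val ⁻¹' A) := by
  intro t
  induction t with
  | zero =>
      intro w A hA
      show Measure.dirac (w : X) A ≤ Measure.dirac w (Subtype.val ⁻¹' A)
      rw [Measure.dirac_apply' _ hA, Measure.dirac_apply' _ (measurable_subtype_coe hA)]
      by_cases h : (w : X) ∈ A
      · rw [Set.indicator_of_mem h, Set.indicator_of_mem (show w ∈ Subtype.val ⁻¹' A from h)]
        simp
      · rw [Set.indicator_of_notMem h]; exact zero_le
  | succ n ih =>
      intro w A hA
      have hgS : Measurable (fun z => (g z).restrict S) := measurable_restK hg.measurable hS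
      have hT : Measurable (traceSub g S) := measurable_traceSub hg.measurable hS
      have emb := MeasurableEmbedding.subtype_coe hS
      show ((g (w : X)).restrict S).bind (iterK (fun z => (g z).restrict S) n) A
        ≤ (traceSub g S w).bind (iterK (traceSub g S) n) (Subtype.val ⁻¹' A)
      rw [Measure.bind_apply hA (measurable_iterK hgS n).aemeasurable,
        Measure.bind_apply (measurable_subtype_coe hA) (measurable_iterK hT n).aemeasurable]
      calc ∫⁻ z, iterK (fun z => (g z).restrict S) n z A ∂((g (w : X)).restrict S)
          ≤ ∫⁻ z, iterK (fun z => (g z).restrict S) n z A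
              ∂((traceK g S (w : X)).restrict S) :=
            lintegral_mono' (restrict_le_traceK hg hS _) le_rfl
        _ = ∫⁻ z, iterK (fun z => (g z).restrict S) n z A
              ∂(Measure.map Subtype.val (traceSub g S w)) := by
            rw [traceSub, emb.map_comap, Subtype.range_coe]
        _ = ∫⁻ u : S, iterK (fun z => (g z).restrict S) n (u : X) A ∂(traceSub g S w) :=
            emb.lintegral_map _
        _ ≤ ∫⁻ u : S, iterK (traceSub g S) n u (Subtype.val ⁻¹' A) ∂(traceSub g S w) :=
            lintegral_mono fun u => ih u A hA

lemma one_le_restK_univ_add {g : X → Measure X} (hg : IsMarkov g) {S : Set X}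
    (hS : MeasurableSet S) :
    ∀ (t : ℕ) (x : X), 1 ≤ iterK (fun z => (g z).restrict S) t x univ
      + ∑ s ∈ Finset.range (t + 1), iterK g s x Sᶜ := by
  have hgS : Measurable (fun z => (g z).restrict S) := measurable_restK hg.measurable hS
  have hg' : Measurable g := hg.measurable
  intro t
  induction t with
  | zero =>
      intro x
      have h1 : iterK (fun z => (g z).restrict S) 0 x univ = 1 := by simp [iterK]
      rw [h1]; exact self_le_add_right _ _
  | succ n ih =>
      intro x
      have key : iterK (fun z => (g z).restrict S) n x univ
          ≤ iterK (fun z => (g z).restrict S) (n + 1) x univ + iterK g (n + 1) x Sᶜ := by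
        have h1 : iterK (fun z => (g z).restrict S) (n + 1) x univ
            = ∫⁻ z, g z S ∂(iterK (fun z => (g z).restrict S) n x) := by
          rw [iterK_succ_right hgS, Measure.bind_apply MeasurableSet.univ hgS.aemeasurable]
          refine lintegral_congr fun z => ?_
          rw [Measure.restrict_apply MeasurableSet.univ, univ_inter]
        have h2 : iterK g (n + 1) x Sᶜ = ∫⁻ z, g z Sᶜ ∂(iterK g n x) := by
          rw [iterK_succ_right hg', Measure.bind_apply hS.compl hg'.aemeasurable]
        calc iterK (fun z => (g z).restrict S) n x univ
            = ∫⁻ _, 1 ∂(iterK (fun z => (g z).restrict S) n x) := lintegral_one.symm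
          _ = ∫⁻ z, (g z S + g z Sᶜ) ∂(iterK (fun z => (g z).restrict S) n x) :=
              lintegral_congr fun z => by
                haveI := hg.1 z
                rw [measure_add_measure_compl hS, measure_univ]
          _ = (∫⁻ z, g z S ∂(iterK (fun z => (g z).restrict S) n x))
              + ∫⁻ z, g z Sᶜ ∂(iterK (fun z => (g z).restrict S) n x) :=
              lintegral_add_left ((Measure.measurable_coe hS).comp hg') _
          _ ≤ iterK (fun z => (g z).restrict S) (n + 1) x univ + iterK g (n + 1) x Sᶜ := by
              refine add_le_add h1.ge ?_
              rw [h2]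
              exact lintegral_mono'
                (iterK_mono hgS hg' (fun y => Measure.restrict_le_self) n x) le_rfl
      calc (1 : ℝ≥0∞)
          ≤ iterK (fun z => (g z).restrict S) n x univ
            + ∑ s ∈ Finset.range (n + 1), iterK g s x Sᶜ := ih x
        _ ≤ (iterK (fun z => (g z).restrict S) (n + 1) x univ + iterK g (n + 1) x Sᶜ)
            + ∑ s ∈ Finset.range (n + 1), iterK g s x Sᶜ := add_le_add_left key _
        _ = iterK (fun z => (g z).restrict S) (n + 1) x univ
            + ∑ s ∈ Finset.range (n + 2), iterK g s x Sᶜ := by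
            conv_rhs => rw [Finset.sum_range_succ]
            ring

lemma tv_trace_lower {g : X → Measure X} (hg : IsMarkov g) {S : Set X}
    (hS : MeasurableSet S) {x y : X} (hx : x ∈ S) (hy : y ∈ S)
    {A : Set X} (hA : MeasurableSet A) {ε : ℝ≥0∞} (hε0 : ε ≠ 0) (hεtop : ε ≠ ⊤)
    {t n : ℕ} (htn : t ≤ n)
    (hgap : iterK g t y A + 1 / 4 + 3 * ε ≤ iterK g t x A)
    (hDx : ∑ s ∈ Finset.range (n + 1), iterK g s x Sᶜ ≤ ε)
    (hDy : ∑ s ∈ Finset.range (n + 1), iterK g s y Sᶜ ≤ ε) :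
    1 / 4 < tv (iterK (traceSub g S) t ⟨x, hx⟩) (iterK (traceSub g S) t ⟨y, hy⟩) := by
  have hgS : Measurable (fun z => (g z).restrict S) := measurable_restK hg.measurable hS
  have hg' : Measurable g := hg.measurable
  have hT : Measurable (traceSub g S) := measurable_traceSub hg.measurable hS
  have hTm : ∀ w : S, traceSub g S w univ ≤ 1 := traceSub_univ_le_one hg hS
  set B : Set S := Subtype.val ⁻¹' A with hBdef
  have hB : MeasurableSet B := measurable_subtype_coe hA
  set P := iterK (traceSub g S) t ⟨x, hx⟩ B with hPdef
  set Q := iterK (traceSub g S) t ⟨y, hy⟩ B with hQdef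
  set ρx := iterK (fun z => (g z).restrict S) t x with hρx
  set ρy := iterK (fun z => (g z).restrict S) t y with hρy
  have hsub : Finset.range (t + 1) ⊆ Finset.range (n + 1) :=
    Finset.range_subset_range.2 (by omega)
  have hDx' : ∑ s ∈ Finset.range (t + 1), iterK g s x Sᶜ ≤ ε :=
    (Finset.sum_le_sum_of_subset hsub).trans hDx
  have hDy' : ∑ s ∈ Finset.range (t + 1), iterK g s y Sᶜ ≤ ε :=
    (Finset.sum_le_sum_of_subset hsub).trans hDy
  have h1x : 1 ≤ ρx univ + ε :=
    (one_le_restK_univ_add hg hS t x).trans (add_le_add_right hDx' _)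
  have h1y : 1 ≤ ρy univ + ε :=
    (one_le_restK_univ_add hg hS t y).trans (add_le_add_right hDy' _)
  have hρx_le : ρx ≤ iterK g t x :=
    iterK_mono hgS hg' (fun z => Measure.restrict_le_self) t x
  have hρy_le : ρy ≤ iterK g t y :=
    iterK_mono hgS hg' (fun z => Measure.restrict_le_self) t y
  have hρxAc_ne : ρx Aᶜ ≠ ⊤ :=
    ((Measure.le_iff'.1 hρx_le Aᶜ).trans (iterK_apply_le_one hg t x Aᶜ)).trans_lt
      (by norm_num) |>.ne
  have hρyAc_ne : ρy Aᶜ ≠ ⊤ :=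
    ((Measure.le_iff'.1 hρy_le Aᶜ).trans (iterK_apply_le_one hg t y Aᶜ)).trans_lt
      (by norm_num) |>.ne
  -- lower bound on P
  have hPb : iterK g t x A ≤ P + ε := by
    have hchain : iterK g t x A + ρx Aᶜ ≤ (P + ε) + ρx Aᶜ := by
      calc iterK g t x A + ρx Aᶜ
          ≤ iterK g t x A + iterK g t x Aᶜ :=
            add_le_add_right (Measure.le_iff'.1 hρx_le Aᶜ) _
        _ = iterK g t x univ := measure_add_measure_compl hA
        _ = 1 := iterK_univ hg t x
        _ ≤ ρx univ + ε := h1x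
        _ = (ρx A + ρx Aᶜ) + ε := by rw [measure_add_measure_compl hA]
        _ ≤ (P + ρx Aᶜ) + ε :=
            add_le_add_left (add_le_add_left
              (iterK_restrict_le_trace hg hS t ⟨x, hx⟩ A hA) _) _
        _ = (P + ε) + ρx Aᶜ := by ring
    exact (ENNReal.add_le_add_iff_right hρxAc_ne).1 hchain
  -- upper bound on Q
  have hQb : Q ≤ iterK g t y A + ε := by
    have hMuniv : iterK (traceSub g S) t ⟨y, hy⟩ univ ≤ 1 :=
      iterK_univ_le_one hT hTm t _
    have hAc : ρy Aᶜ ≤ iterK (traceSub g S) t ⟨y, hy⟩ Bᶜ := by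
      have := iterK_restrict_le_trace hg hS t ⟨y, hy⟩ Aᶜ hA.compl
      simpa [hBdef] using this
    have hchain : Q + ρy Aᶜ ≤ (iterK g t y A + ε) + ρy Aᶜ := by
      calc Q + ρy Aᶜ ≤ Q + iterK (traceSub g S) t ⟨y, hy⟩ Bᶜ := add_le_add_right hAc _
        _ = iterK (traceSub g S) t ⟨y, hy⟩ univ := measure_add_measure_compl hB
        _ ≤ 1 := hMuniv
        _ ≤ ρy univ + ε := h1y
        _ = (ρy A + ρy Aᶜ) + ε := by rw [measure_add_measure_compl hA]
        _ ≤ (iterK g t y A + ρy Aᶜ) + ε :=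
            add_le_add_left (add_le_add_left (Measure.le_iff'.1 hρy_le A) _) _
        _ = (iterK g t y A + ε) + ρy Aᶜ := by ring
    exact (ENNReal.add_le_add_iff_right hρyAc_ne).1 hchain
  -- conclude
  have hQ1 : Q ≤ 1 :=
    (measure_mono (subset_univ B)).trans (iterK_univ_le_one hT hTm t _)
  have hQtop : Q + 1 / 4 ≠ ⊤ :=
    ((add_le_add_left hQ1 _).trans_lt (by norm_num)).ne
  have hcancel : Q + 1 / 4 + ε ≤ P := by
    have hchain : (Q + 1 / 4 + ε) + 2 * ε ≤ P + 2 * ε := by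
      calc (Q + 1 / 4 + ε) + 2 * ε = Q + 1 / 4 + 3 * ε := by ring
        _ ≤ (iterK g t y A + ε) + 1 / 4 + 3 * ε :=
            add_le_add_left (add_le_add_left hQb _) _
        _ = (iterK g t y A + 1 / 4 + 3 * ε) + ε := by ring
        _ ≤ iterK g t x A + ε := add_le_add_left hgap _
        _ ≤ (P + ε) + ε := add_le_add_left hPb _
        _ = P + 2 * ε := by ring
    exact (ENNReal.add_le_add_iff_right (by
      simpa using ENNReal.mul_ne_top (by norm_num) hεtop)).1 hchain
  have hQP : Q + 1 / 4 < P :=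
    lt_of_lt_of_le (ENNReal.lt_add_right hQtop hε0) hcancel
  have hlt : 1 / 4 < P - Q := lt_tsub_iff_right.2 (by rwa [add_comm] at hQP)
  calc (1 / 4 : ℝ≥0∞) < P - Q := hlt
    _ ≤ (P - Q) ⊔ (Q - P) := le_sup_left
    _ ≤ tv (iterK (traceSub g S) t ⟨x, hx⟩) (iterK (traceSub g S) t ⟨y, hy⟩) := by
        rw [tv]
        exact le_iSup₂ (f := fun (C : Set S) (_ : MeasurableSet C) =>
          (iterK (traceSub g S) t ⟨x, hx⟩ C - iterK (traceSub g S) t ⟨y, hy⟩ C)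
            ⊔ (iterK (traceSub g S) t ⟨y, hy⟩ C - iterK (traceSub g S) t ⟨x, hx⟩ C)) B hB

end Aux

section KeyLemma

open Measure Set Filter

lemma key_lemma {X : Type*} [MetricSpace X] [MeasurableSpace X] [BorelSpace X]
    [SigmaCompactSpace X] (g : X → Measure X) (π : Measure X)
    (hg : IsMarkov g) (hπ : IsProbabilityMeasure π) (n : ℕ)
    (h : ∀ t ≤ n, (1 / 4 : ℝ≥0∞) < dbar g t) :
    ∃ S : Set X, IsCompact S ∧ MeasurableSet S ∧ 0 < π S ∧
      ((n + 1 : ℕ) : ℝ≥0∞) ≤ stdMix (traceSub g S) (1 / 4) := by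
  classical
  -- extract witnesses
  have hw : ∀ i : Fin (n + 1), ∃ x y : X, ∃ A : Set X, MeasurableSet A ∧
      iterK g (i : ℕ) y A + 1 / 4 < iterK g (i : ℕ) x A := by
    intro i
    have hi := h i (Nat.lt_succ_iff.1 i.isLt)
    rw [dbar] at hi
    obtain ⟨a, ha⟩ := lt_iSup_iff.1 hi
    obtain ⟨b, hb⟩ := lt_iSup_iff.1 ha
    rw [tv] at hb
    obtain ⟨A, hA2⟩ := lt_iSup_iff.1 hb
    obtain ⟨hA, hlt⟩ := lt_iSup_iff.1 hA2
    rcases lt_sup_iff.1 hlt with hc | hc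
    · refine ⟨a, b, A, hA, ?_⟩
      rw [add_comm]
      exact lt_tsub_iff_right.1 hc
    · refine ⟨b, a, A, hA, ?_⟩
      rw [add_comm]
      exact lt_tsub_iff_right.1 hc
  choose xs ys As hAs hgap using hw
  -- margins
  set δ : Fin (n + 1) → ℝ≥0∞ :=
    fun i => iterK g (i : ℕ) (xs i) (As i) - (iterK g (i : ℕ) (ys i) (As i) + 1 / 4) with hδ
  have hδpos : ∀ i, 0 < δ i := fun i => tsub_pos_iff_lt.2 (hgap i)
  have hne : (Finset.univ : Finset (Fin (n + 1))).Nonempty := Finset.univ_nonempty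
  set ε : ℝ≥0∞ := (Finset.univ.inf' hne δ) / 3 with hε
  have hinfpos : 0 < Finset.univ.inf' hne δ :=
    (Finset.lt_inf'_iff _).2 fun i _ => hδpos i
  have hε0 : ε ≠ 0 := (ENNReal.div_pos hinfpos.ne' (by norm_num)).ne'
  have hinf_le_one : Finset.univ.inf' hne δ ≤ 1 := by
    refine (Finset.inf'_le δ (Finset.mem_univ ⟨0, Nat.succ_pos n⟩)).trans ?_
    exact (tsub_le_self).trans (iterK_apply_le_one hg _ _ _)
  have hεtop : ε ≠ ⊤ := by
    refine ne_top_of_le_ne_top (by norm_num : (1 / 3 : ℝ≥0∞) ≠ ⊤) ?_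
    rw [hε]
    exact ENNReal.div_le_div_right hinf_le_one 3
  have h3ε : ∀ i : Fin (n + 1),
      iterK g (i : ℕ) (ys i) (As i) + 1 / 4 + 3 * ε ≤ iterK g (i : ℕ) (xs i) (As i) := by
    intro i
    have h3 : 3 * ε ≤ δ i := by
      rw [hε, ENNReal.mul_div_cancel' (by norm_num) (by norm_num)]
      exact Finset.inf'_le δ (Finset.mem_univ i)
    calc iterK g (i : ℕ) (ys i) (As i) + 1 / 4 + 3 * ε
        ≤ iterK g (i : ℕ) (ys i) (As i) + 1 / 4 + δ i := add_le_add_right h3 _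
      _ = iterK g (i : ℕ) (xs i) (As i) := add_tsub_cancel_of_le (hgap i).le
  -- choose a large compact set
  set η : ℝ≥0∞ := ε / (n + 1) with hηdef
  have hη : 0 < η := ENNReal.div_pos hε0 (by simp)
  have hcc : ∀ (μ : Measure X), IsProbabilityMeasure μ → ∀ {c : ℝ≥0∞}, 0 < c →
      ∀ᶠ m in atTop, μ (compactCovering X m)ᶜ < c := by
    intro μ hμ c hc
    have hanti : Antitone fun m => (compactCovering X m)ᶜ :=
      fun a b hab => compl_subset_compl.2 (compactCovering_subset X hab)
    have htend := tendsto_measure_iInter_atTop (μ := μ)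
      (fun m => ((isCompact_compactCovering X m).isClosed.measurableSet.compl).nullMeasurableSet)
      hanti ⟨0, measure_ne_top μ _⟩
    have hint : ⋂ m, (compactCovering X m)ᶜ = ∅ := by
      rw [← Set.compl_iUnion, iUnion_compactCovering, Set.compl_univ]
    rw [hint, measure_empty] at htend
    exact htend.eventually_lt_const hc
  have hprob : ∀ (s : ℕ) (z : X), IsProbabilityMeasure (iterK g s z) :=
    fun s z => ⟨iterK_univ hg s z⟩
  have hall : ∀ᶠ m in atTop, (∀ i : Fin (n + 1), ∀ s : Fin (n + 1),
      iterK g (s : ℕ) (xs i) (compactCovering X m)ᶜ < η ∧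
      iterK g (s : ℕ) (ys i) (compactCovering X m)ᶜ < η) ∧
      π (compactCovering X m)ᶜ < 1 := by
    refine Filter.Eventually.and ?_ (hcc π hπ one_pos)
    rw [Filter.eventually_all]
    intro i
    rw [Filter.eventually_all]
    intro s
    exact (hcc _ (hprob _ _) hη).and (hcc _ (hprob _ _) hη)
  obtain ⟨m, hm⟩ := hall.exists
  set Sp : Set X := ⋃ i : Fin (n + 1), ({xs i, ys i} : Set X) with hSp
  have hSpfin : Sp.Finite := Set.finite_iUnion fun i => (Set.finite_singleton _).insert _
  set S : Set X := compactCovering X m ∪ Sp with hSdef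
  have hcomp : IsCompact S := (isCompact_compactCovering X m).union hSpfin.isCompact
  have hSmeas : MeasurableSet S := hcomp.isClosed.measurableSet
  have hπS : 0 < π S := by
    have hle : π (compactCovering X m) ≤ π S := measure_mono subset_union_left
    rcases eq_or_lt_of_le (zero_le : 0 ≤ π (compactCovering X m)) with h0 | h0
    · exfalso
      have hcompl : π (compactCovering X m)ᶜ = 1 := by
        have := measure_add_measure_compl
          (μ := π) (isCompact_compactCovering X m).isClosed.measurableSet
        rw [← h0, zero_add, measure_univ] at this
        exact this
      rw [hcompl] at hm
      exact lt_irrefl _ hm.2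
    · exact h0.trans_le hle
  have hxS : ∀ i : Fin (n + 1), xs i ∈ S :=
    fun i => Or.inr (Set.mem_iUnion.2 ⟨i, by simp⟩)
  have hyS : ∀ i : Fin (n + 1), ys i ∈ S :=
    fun i => Or.inr (Set.mem_iUnion.2 ⟨i, by simp⟩)
  have hScomplsub : Sᶜ ⊆ (compactCovering X m)ᶜ :=
    compl_subset_compl.2 subset_union_left
  have hDbound : ∀ z : X, (∀ s : Fin (n + 1),
      iterK g (s : ℕ) z (compactCovering X m)ᶜ < η) →
      ∑ s ∈ Finset.range (n + 1), iterK g s z Sᶜ ≤ ε := by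
    intro z hz
    calc ∑ s ∈ Finset.range (n + 1), iterK g s z Sᶜ
        ≤ ∑ _s ∈ Finset.range (n + 1), η := by
          refine Finset.sum_le_sum fun s hs => ?_
          have := hz ⟨s, Finset.mem_range.1 hs⟩
          exact (measure_mono hScomplsub).trans this.le
      _ = ((n + 1 : ℕ) : ℝ≥0∞) * η := by
          rw [Finset.sum_const, Finset.card_range, nsmul_eq_mul]
      _ = ε := by
          rw [hηdef]
          rw [show (((n : ℕ) + 1 : ℕ) : ℝ≥0∞) = ((n : ℝ≥0∞) + 1) by push_cast; ring]
          exact ENNReal.mul_div_cancel' (by simp) (by simp)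
  have hDx : ∀ i : Fin (n + 1), ∑ s ∈ Finset.range (n + 1), iterK g s (xs i) Sᶜ ≤ ε :=
    fun i => hDbound (xs i) fun s => (hm.1 i s).1
  have hDy : ∀ i : Fin (n + 1), ∑ s ∈ Finset.range (n + 1), iterK g s (ys i) Sᶜ ≤ ε :=
    fun i => hDbound (ys i) fun s => (hm.1 i s).2
  -- the trace chain has not mixed by time n
  have hdbar : ∀ t ≤ n, (1 / 4 : ℝ≥0∞) < dbar (traceSub g S) t := by
    intro t ht
    set i : Fin (n + 1) := ⟨t, Nat.lt_succ_of_le ht⟩ with hi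
    have hlow := tv_trace_lower hg hSmeas (hxS i) (hyS i) (hAs i) hε0 hεtop
      (show (i : ℕ) ≤ n from ht) (h3ε i) (hDx i) (hDy i)
    refine hlow.trans_le ?_
    rw [dbar]
    exact le_iSup₂ (f := fun (a b : S) =>
      tv (iterK (traceSub g S) t a) (iterK (traceSub g S) t b)) _ _
  refine ⟨S, hcomp, hSmeas, hπS, ?_⟩
  rw [stdMix]
  refine le_iInf fun t => le_iInf fun hdb => ?_
  rcases le_or_gt t n with h' | h'
  · exact absurd hdb (not_le.2 (hdbar t h'))
  · exact_mod_cast h'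

end KeyLemma

/-- the standardized mixing time is bounded by the supremum of the
standardized mixing times of the traces on compact sets of positive measure. -/
theorem stmt6 {X : Type*} [MetricSpace X] [MeasurableSpace X] [BorelSpace X]
    [SigmaCompactSpace X] (g : X → Measure X) (π : Measure X)
    (hg : IsMarkov g) (hπ : IsProbabilityMeasure π) (hstat : Stationary g π) :
    stdMix g (1 / 4) ≤
      ⨆ (S : Set X) (_ : IsCompact S) (_ : MeasurableSet S) (_ : 0 < π S),
        stdMix (traceSub g S) (1 / 4) := by
  classical
  set R := ⨆ (S : Set X) (_ : IsCompact S) (_ : MeasurableSet S) (_ : 0 < π S),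
      stdMix (traceSub g S) (1 / 4) with hR
  have hRS : ∀ (S : Set X), IsCompact S → MeasurableSet S → 0 < π S →
      stdMix (traceSub g S) (1 / 4) ≤ R := by
    intro S hc hm hp
    rw [hR]
    exact le_iSup_of_le S (le_iSup_of_le hc (le_iSup_of_le hm (le_iSup_of_le hp le_rfl)))
  by_cases hex : ∃ t : ℕ, dbar g t ≤ 1 / 4
  · set t₀ := Nat.find hex with ht₀
    have hLHS : stdMix g (1 / 4) ≤ (t₀ : ℝ≥0∞) := by
      rw [stdMix]
      exact iInf₂_le t₀ (Nat.find_spec hex)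
    rcases Nat.eq_zero_or_pos t₀ with h0 | hpos
    · rw [h0] at hLHS
      exact le_trans (by simpa using hLHS : stdMix g (1 / 4) ≤ 0) zero_le
    · obtain ⟨n, hn⟩ : ∃ n, t₀ = n + 1 := ⟨t₀ - 1, (Nat.succ_pred_eq_of_pos hpos).symm⟩
      have hlt : ∀ t ≤ n, (1 / 4 : ℝ≥0∞) < dbar g t := by
        intro t htn
        exact lt_of_not_ge (Nat.find_min hex (by omega))
      obtain ⟨S, hc, hm, hp, hb⟩ := key_lemma g π hg hπ n hlt
      calc stdMix g (1 / 4) ≤ (t₀ : ℝ≥0∞) := hLHS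
        _ = ((n + 1 : ℕ) : ℝ≥0∞) := by rw [hn]
        _ ≤ stdMix (traceSub g S) (1 / 4) := hb
        _ ≤ R := hRS S hc hm hp
  · have hlt : ∀ t : ℕ, (1 / 4 : ℝ≥0∞) < dbar g t :=
      fun t => lt_of_not_ge fun hcon => hex ⟨t, hcon⟩
    have hRn : ∀ k : ℕ, (k : ℝ≥0∞) ≤ R := by
      intro k
      obtain ⟨S, hc, hm, hp, hb⟩ := key_lemma g π hg hπ k (fun t _ => hlt t)
      calc (k : ℝ≥0∞) ≤ ((k + 1 : ℕ) : ℝ≥0∞) := by exact_mod_cast Nat.le_succ k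
        _ ≤ stdMix (traceSub g S) (1 / 4) := hb
        _ ≤ R := hRS S hc hm hp
    have hRtop : R = ⊤ := by
      by_contra hne
      obtain ⟨k, hk⟩ := ENNReal.exists_nat_gt hne
      exact absurd (hRn k) (not_le.2 hk)
    rw [hRtop]
    exact le_top

end MixHit
end
end

section
/- There exists a universal constant 0 < C < ∞, not depending on α, such that for every 0 < α < 1/2 and every discrete-time Markov transition kernel g on a σ-compact metric state space X with stationary distribution π, one has t_H(α) ≤ ℓ_H(α) ≤ C · t_H(α), where t_H(α) is the maximum hitting time of g and ℓ_H(α) is the maximum hitting time of the lazy kernel g_L. -/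
open MeasureTheory ENNReal

noncomputable section

namespace MixHit

variable {X : Type*} [MeasurableSpace X]

-- auxiliary development
variable {g : X → Measure X} {A : Set X}

def toKer (g : X → Measure X) (hg : IsMarkov g) : ProbabilityTheory.Kernel X X :=
  ⟨g, Measure.measurable_of_measurable_coe g (fun s hs => hg.2 s hs)⟩

lemma measurable_lint (hg : IsMarkov g) {f : X → ℝ≥0∞} (hf : Measurable f) :
    Measurable fun x => ∫⁻ y, f y ∂(g x) := by
  haveI : ProbabilityTheory.IsMarkovKernel (toKer g hg) := ⟨hg.1⟩
  exact hf.lintegral_kernel (κ := toKer g hg)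

lemma lint_one (hg : IsMarkov g) (x : X) : ∫⁻ _, (1 : ℝ≥0∞) ∂(g x) = 1 := by
  haveI := hg.1 x; simp

def sv (g : X → Measure X) (A : Set X) : ℕ → X → ℝ≥0∞
  | 0 => Aᶜ.indicator 1
  | n + 1 => fun x => Aᶜ.indicator (fun x' => ∫⁻ y, sv g A n y ∂(g x')) x

lemma sv_measurable (hg : IsMarkov g) (hA : MeasurableSet A) :
    ∀ n, Measurable (sv g A n)
  | 0 => measurable_one.indicator hA.compl
  | n + 1 => (measurable_lint hg (sv_measurable hg hA n)).indicator hA.compl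

lemma sv_of_mem {x : X} (hx : x ∈ A) (n : ℕ) : sv g A n x = 0 := by
  cases n <;> simp [sv, Set.indicator_apply, hx]

lemma sv_le_one (hg : IsMarkov g) : ∀ (n : ℕ) (x : X), sv g A n x ≤ 1
  | 0, x => by by_cases hx : x ∈ A <;> simp [sv, Set.indicator_apply, hx]
  | n + 1, x => by
      by_cases hx : x ∈ A
      · simp [sv, Set.indicator_apply, hx]
      · rw [show sv g A (n + 1) x = ∫⁻ y, sv g A n y ∂(g x) by
          simp [sv, Set.indicator_apply, hx]]
        calc ∫⁻ y, sv g A n y ∂(g x) ≤ ∫⁻ _, 1 ∂(g x) :=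
              lintegral_mono fun y => sv_le_one hg n y
          _ = 1 := lint_one hg x

lemma hitEq_measurable (hg : IsMarkov g) (hA : MeasurableSet A) :
    ∀ n, Measurable (hitEq g A n)
  | 0 => measurable_const.indicator hA
  | n + 1 => (measurable_lint hg (hitEq_measurable hg hA n)).indicator hA.compl

lemma hitLE_measurable (hg : IsMarkov g) (hA : MeasurableSet A) (t : ℕ) :
    Measurable fun x => hitLE g A t x :=
  Finset.measurable_sum _ fun s _ => hitEq_measurable hg hA s

lemma hitLE_succ (hg : IsMarkov g) (hA : MeasurableSet A) (t : ℕ) (x : X) :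
    hitLE g A (t + 1) x
      = A.indicator 1 x + Aᶜ.indicator (fun x' => ∫⁻ y, hitLE g A t y ∂(g x')) x := by
  unfold hitLE
  rw [Finset.sum_range_succ']
  by_cases hx : x ∈ A
  · have h0 : ∀ s, hitEq g A (s + 1) x = 0 := fun s => by
      simp [hitEq, Set.indicator_apply, hx]
    simp [h0, hitEq, Set.indicator_apply, hx]
  · have h0 : ∀ s, hitEq g A (s + 1) x = ∫⁻ y, hitEq g A s y ∂(g x) := fun s => by
      simp [hitEq, Set.indicator_apply, hx]
    simp only [h0]
    rw [← lintegral_finset_sum _ (fun s _ => hitEq_measurable hg hA s)]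
    simp [hitEq, Set.indicator_apply, hx]

lemma hitLE_add_sv (hg : IsMarkov g) (hA : MeasurableSet A) :
    ∀ (t : ℕ) (x : X), hitLE g A t x + sv g A t x = 1
  | 0, x => by by_cases hx : x ∈ A <;> simp [hitLE, hitEq, sv, Set.indicator_apply, hx]
  | t + 1, x => by
      rw [hitLE_succ hg hA]
      by_cases hx : x ∈ A
      · simp [sv, Set.indicator_apply, hx]
      · rw [Set.indicator_of_notMem hx, Set.indicator_of_mem (Set.mem_compl hx), zero_add]
        have hsv : sv g A (t + 1) x = ∫⁻ y, sv g A t y ∂(g x) := by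
          simp [sv, Set.indicator_apply, hx]
        rw [hsv, ← lintegral_add_left (hitLE_measurable hg hA t),
          lintegral_congr (fun y => hitLE_add_sv hg hA t y)]
        exact lint_one hg x

lemma hitLE_le_one (hg : IsMarkov g) (hA : MeasurableSet A) (t : ℕ) (x : X) :
    hitLE g A t x ≤ 1 :=
  le_self_add.trans_eq (hitLE_add_sv hg hA t x)

lemma one_sub_hitLE (hg : IsMarkov g) (hA : MeasurableSet A) (t : ℕ) (x : X) :
    1 - hitLE g A t x = sv g A t x := by
  refine ENNReal.sub_eq_of_eq_add (ne_top_of_le_ne_top one_ne_top (hitLE_le_one hg hA t x)) ?_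
  rw [← hitLE_add_sv hg hA t x, add_comm]

lemma expHit_eq (hg : IsMarkov g) (hA : MeasurableSet A) (x : X) :
    expHit g A x = ∑' t : ℕ, sv g A t x :=
  tsum_congr fun t => one_sub_hitLE hg hA t x

lemma lazy_isMarkov (hg : IsMarkov g) : IsMarkov (lazy g) := by
  refine ⟨fun x => ?_, fun A hA => ?_⟩
  · haveI := hg.1 x
    constructor
    simp [lazy, Measure.add_apply, measure_univ, ENNReal.inv_two_add_inv_two]
  · have h : (fun x => lazy g x A) = fun x => 2⁻¹ * g x A + 2⁻¹ * A.indicator 1 x := by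
      funext x
      simp [lazy, Measure.dirac_apply' x hA]
    rw [h]
    exact ((hg.2 A hA).const_mul _).add ((measurable_one.indicator hA).const_mul _)

lemma lintegral_lazy {f : X → ℝ≥0∞} (hf : Measurable f) (x : X) :
    ∫⁻ y, f y ∂(lazy g x) = 2⁻¹ * ∫⁻ y, f y ∂(g x) + 2⁻¹ * f x := by
  simp [lazy, lintegral_add_measure, lintegral_smul_measure, lintegral_dirac' x hf]

lemma pascal_sum (t : ℕ) (u : ℕ → ℝ≥0∞) :
    ∑ s ∈ Finset.range (t + 2), (((t + 1).choose s : ℝ≥0∞)) * 2⁻¹ ^ (t + 1) * u s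
      = ∑ s ∈ Finset.range (t + 1), ((t.choose s : ℝ≥0∞)) * 2⁻¹ ^ (t + 1) * u (s + 1)
        + ∑ s ∈ Finset.range (t + 1), ((t.choose s : ℝ≥0∞)) * 2⁻¹ ^ (t + 1) * u s := by
  rw [Finset.sum_range_succ' _ (t + 1)]
  have h1 : ∀ s, (((t + 1).choose (s + 1) : ℝ≥0∞)) * 2⁻¹ ^ (t + 1) * u (s + 1)
      = ((t.choose s : ℝ≥0∞)) * 2⁻¹ ^ (t + 1) * u (s + 1)
        + ((t.choose (s + 1) : ℝ≥0∞)) * 2⁻¹ ^ (t + 1) * u (s + 1) := fun s => by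
    rw [Nat.choose_succ_succ]
    push_cast
    ring
  simp only [h1, Finset.sum_add_distrib]
  have h2 : ∑ s ∈ Finset.range (t + 1), ((t.choose (s + 1) : ℝ≥0∞)) * 2⁻¹ ^ (t + 1) * u (s + 1)
        + (((t + 1).choose 0 : ℝ≥0∞)) * 2⁻¹ ^ (t + 1) * u 0
      = ∑ s ∈ Finset.range (t + 1), ((t.choose s : ℝ≥0∞)) * 2⁻¹ ^ (t + 1) * u s := by
    rw [show (((t + 1).choose 0 : ℝ≥0∞)) = ((t.choose 0 : ℝ≥0∞)) by simp,
      ← Finset.sum_range_succ' (fun s => ((t.choose s : ℝ≥0∞)) * 2⁻¹ ^ (t + 1) * u s) (t + 1),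
      Finset.sum_range_succ]
    simp
  rw [add_assoc, h2]

lemma sv_lazy (hg : IsMarkov g) (hA : MeasurableSet A) :
    ∀ (t : ℕ) (x : X), sv (lazy g) A t x
      = ∑ s ∈ Finset.range (t + 1), ((t.choose s : ℝ≥0∞)) * 2⁻¹ ^ t * sv g A s x := by
  intro t
  induction t with
  | zero => intro x; simp [sv]
  | succ t ih =>
      intro x
      by_cases hx : x ∈ A
      · rw [sv_of_mem hx]
        exact (Finset.sum_eq_zero fun s _ => by rw [sv_of_mem hx, mul_zero]).symm
      · have hmL : Measurable (sv (lazy g) A t) := sv_measurable (lazy_isMarkov hg) hA t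
        have step1 : sv (lazy g) A (t + 1) x = ∫⁻ y, sv (lazy g) A t y ∂(lazy g x) := by
          simp [sv, Set.indicator_apply, hx]
        have h1 : ∫⁻ y, sv (lazy g) A t y ∂(g x)
            = ∑ s ∈ Finset.range (t + 1), ((t.choose s : ℝ≥0∞)) * 2⁻¹ ^ t
                * ∫⁻ y, sv g A s y ∂(g x) := by
          rw [lintegral_congr (fun y => ih y),
            lintegral_finset_sum _ (fun s _ => (sv_measurable hg hA s).const_mul _)]
          exact Finset.sum_congr rfl fun s _ => lintegral_const_mul _ (sv_measurable hg hA s)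
        have hss : ∀ s, ∫⁻ y, sv g A s y ∂(g x) = sv g A (s + 1) x := fun s => by
          simp [sv, Set.indicator_apply, hx]
        calc sv (lazy g) A (t + 1) x
            = 2⁻¹ * ∫⁻ y, sv (lazy g) A t y ∂(g x) + 2⁻¹ * sv (lazy g) A t x := by
              rw [step1, lintegral_lazy hmL]
          _ = 2⁻¹ * ∑ s ∈ Finset.range (t + 1), ((t.choose s : ℝ≥0∞)) * 2⁻¹ ^ t * sv g A (s + 1) x
              + 2⁻¹ * ∑ s ∈ Finset.range (t + 1), ((t.choose s : ℝ≥0∞)) * 2⁻¹ ^ t * sv g A s x := by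
              rw [h1, ih x]
              congr 1
              congr 1
              exact Finset.sum_congr rfl fun s _ => by rw [hss s]
          _ = ∑ s ∈ Finset.range (t + 1), ((t.choose s : ℝ≥0∞)) * 2⁻¹ ^ (t + 1) * sv g A (s + 1) x
              + ∑ s ∈ Finset.range (t + 1), ((t.choose s : ℝ≥0∞)) * 2⁻¹ ^ (t + 1) * sv g A s x := by
              rw [Finset.mul_sum, Finset.mul_sum]
              congr 1 <;> exact Finset.sum_congr rfl fun s _ => by rw [pow_succ]; ring
          _ = ∑ s ∈ Finset.range (t + 1 + 1), (((t + 1).choose s : ℝ≥0∞)) * 2⁻¹ ^ (t + 1)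
                * sv g A s x := (pascal_sum t (fun s => sv g A s x)).symm

lemma choose_tsum (s : ℕ) : ∑' t : ℕ, (t.choose s : ℝ≥0∞) * 2⁻¹ ^ t = 2 := by
  rw [← Summable.sum_add_tsum_nat_add' (k := s) ENNReal.summable]
  have h0 : ∑ i ∈ Finset.range s, (i.choose s : ℝ≥0∞) * 2⁻¹ ^ i = 0 := by
    apply Finset.sum_eq_zero
    intro i hi
    rw [Nat.choose_eq_zero_of_lt (Finset.mem_range.mp hi)]
    simp
  rw [h0, zero_add]
  have hhalf : |(1/2 : ℝ)| < 1 := by rw [abs_of_pos] <;> norm_num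
  have hreal : ∑' k : ℕ, ((k + s).choose s : ℝ) * (1/2 : ℝ) ^ k = 2 ^ (s + 1) := by
    rw [tsum_choose_mul_geometric_of_norm_lt_one s (by rw [Real.norm_eq_abs]; exact hhalf)]
    rw [show (1:ℝ) - 1/2 = 1/2 by norm_num, one_div, one_div, inv_pow, inv_inv]
  have hofr : (2⁻¹ : ℝ≥0∞) = ENNReal.ofReal (1/2) := by
    rw [show (1/2 : ℝ) = (2 : ℝ)⁻¹ by norm_num, ENNReal.ofReal_inv_of_pos (by norm_num),
      ENNReal.ofReal_ofNat]
  have hr : ∑' k : ℕ, ((k + s).choose s : ℝ≥0∞) * (2⁻¹ : ℝ≥0∞) ^ k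
      = ENNReal.ofReal (2 ^ (s + 1)) := by
    rw [← hreal, ENNReal.ofReal_tsum_of_nonneg (fun k => by positivity)
      (summable_choose_mul_geometric_of_norm_lt_one s (by rw [Real.norm_eq_abs]; exact hhalf))]
    refine tsum_congr fun k => ?_
    rw [ENNReal.ofReal_mul (by positivity), ENNReal.ofReal_pow (by norm_num),
      ENNReal.ofReal_natCast, hofr]
  calc ∑' k : ℕ, ((k + s).choose s : ℝ≥0∞) * 2⁻¹ ^ (k + s)
      = 2⁻¹ ^ s * ∑' k : ℕ, ((k + s).choose s : ℝ≥0∞) * 2⁻¹ ^ k := by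
        rw [← ENNReal.tsum_mul_left]
        refine tsum_congr fun k => by ring
    _ = 2⁻¹ ^ s * ENNReal.ofReal (2 ^ (s + 1)) := by rw [hr]
    _ = 2 := by
        rw [ENNReal.ofReal_pow (by norm_num), ENNReal.ofReal_ofNat, pow_succ, ← mul_assoc,
          ← mul_pow, ENNReal.inv_mul_cancel two_ne_zero ofNat_ne_top, one_pow, one_mul]

lemma expHit_lazy_eq (hg : IsMarkov g) (hA : MeasurableSet A) (x : X) :
    expHit (lazy g) A x = 2 * expHit g A x := by
  rw [expHit_eq (lazy_isMarkov hg) hA, expHit_eq hg hA]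
  have h1 : ∀ t : ℕ, sv (lazy g) A t x
      = ∑' s : ℕ, ((t.choose s : ℝ≥0∞)) * 2⁻¹ ^ t * sv g A s x := fun t => by
    rw [sv_lazy hg hA t x]
    refine (tsum_eq_sum fun s hs => ?_).symm
    rw [Nat.choose_eq_zero_of_lt (by simpa using hs)]
    simp
  calc ∑' t : ℕ, sv (lazy g) A t x
      = ∑' (t : ℕ) (s : ℕ), ((t.choose s : ℝ≥0∞)) * 2⁻¹ ^ t * sv g A s x := tsum_congr h1
    _ = ∑' (s : ℕ) (t : ℕ), ((t.choose s : ℝ≥0∞)) * 2⁻¹ ^ t * sv g A s x := ENNReal.tsum_comm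
    _ = ∑' s : ℕ, (∑' t : ℕ, (t.choose s : ℝ≥0∞) * 2⁻¹ ^ t) * sv g A s x := by
        refine tsum_congr fun s => ?_
        rw [ENNReal.tsum_mul_right]
    _ = ∑' s : ℕ, 2 * sv g A s x := by
        refine tsum_congr fun s => ?_
        rw [choose_tsum s]
    _ = 2 * ∑' s : ℕ, sv g A s x := ENNReal.tsum_mul_left

/-- comparison of the maximum hitting times of a chain and its lazy
version, with a universal constant not depending on `α`. -/
theorem stmt14 :
    ∃ C : ℝ, 0 < C ∧
      ∀ α : ℝ, 0 < α → α < 1 / 2 →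
        ∀ (X : Type) [MetricSpace X] [MeasurableSpace X] [BorelSpace X]
          [SigmaCompactSpace X] (g : X → Measure X) (π : Measure X),
          IsMarkov g → IsProbabilityMeasure π → Stationary g π →
          maxHit g π α ≤ maxHit (lazy g) π α ∧
            maxHit (lazy g) π α ≤ ENNReal.ofReal C * maxHit g π α := by
  refine ⟨2, by norm_num, ?_⟩
  intro α hα hα' X _ _ _ _ g π hg hπ hst
  have key : ∀ (x : X) (A : Set X), MeasurableSet A →
      expHit (lazy g) A x = 2 * expHit g A x := fun x A hA => expHit_lazy_eq hg hA x
  constructor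
  · unfold maxHit
    refine iSup_le fun x => iSup_le fun A => iSup_le fun hA => iSup_le fun hπA => ?_
    refine le_iSup_of_le x (le_iSup_of_le A (le_iSup_of_le hA (le_iSup_of_le hπA ?_)))
    rw [key x A hA]
    exact le_mul_of_one_le_left zero_le one_le_two
  · rw [ENNReal.ofReal_ofNat]
    unfold maxHit
    refine iSup_le fun x => iSup_le fun A => iSup_le fun hA => iSup_le fun hπA => ?_
    rw [key x A hA]
    have hle : expHit g A x ≤
        ⨆ (x : X) (A : Set X) (_ : MeasurableSet A) (_ : ENNReal.ofReal α ≤ π A),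
          expHit g A x :=
      le_iSup_of_le x (le_iSup_of_le A (le_iSup_of_le hA (le_iSup_of_le hπA le_rfl)))
    exact mul_le_mul_right hle 2
end MixHit
end
end
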